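/- Let G be a finite (d_u, d_w)-regular bipartite graph with bipartition (U, W) and let {X_1, …, X_ℓ, Y} be a Godsil–McKay switching partition of its vertex set. Suppose X_i is of Type 1 (i.e., X_i ⊆ U), and let Y_i ⊆ Y be the set of vertices y ∈ Y that have exactly |X_i|/2 neighbors in X_i. Then every vertex of X_i is adjacent to exactly |Y_i|/2 vertices of Y_i; in particular |Y_i| is even. -/

import Mathlib

open Finset SimpleGraph Polynomial

open scoped Classical in
/-- Number of neighbors of `v` inside the finset `S`, in the graph `G`. -/
noncomputable def nbrsIn {V : Type*} (G : SimpleGraph V) (v : V) (S : Finset V) : ℕ :=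
  (S.filter (fun w => G.Adj v w)).card

/-- The `i`-th part `X_i` of a partition of the vertex set encoded by `f`
(`f v = some i` means `v ∈ X_i`, and `f v = none` means `v ∈ Y`). -/
def Xset {V : Type*} [Fintype V] {ℓ : ℕ} (f : V → Option (Fin ℓ)) (i : Fin ℓ) : Finset V :=
  Finset.univ.filter (fun v => f v = some i)

/-- The part `Y` of the partition of the vertex set encoded by `f`. -/
def Yset {V : Type*} [Fintype V] {ℓ : ℕ} (f : V → Option (Fin ℓ)) : Finset V :=
  Finset.univ.filter (fun v => f v = none)

/-- The partition `{X_1, …, X_ℓ, Y}` (encoded by `f`) is a Godsil–McKay switching partition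
of `G`: every `y ∈ Y` has `0`, `|X_i|/2` or `|X_i|` neighbors in each `X_i`, and for all `i, j`,
all vertices of `X_i` have the same number of neighbors in `X_j`. -/
def IsGMPartition {V : Type*} [Fintype V] (G : SimpleGraph V) {ℓ : ℕ}
    (f : V → Option (Fin ℓ)) : Prop :=
  (∀ y ∈ Yset f, ∀ i : Fin ℓ,
      nbrsIn G y (Xset f i) = 0 ∨ 2 * nbrsIn G y (Xset f i) = (Xset f i).card ∨
        nbrsIn G y (Xset f i) = (Xset f i).card) ∧
  (∀ i j : Fin ℓ, ∀ u ∈ Xset f i, ∀ v ∈ Xset f i,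
      nbrsIn G u (Xset f j) = nbrsIn G v (Xset f j))

/-- The pairs of vertices whose adjacency is flipped by the Godsil–McKay switching:
one of them lies in `Y`, the other in some `X_i`, and the former has exactly `|X_i|/2`
neighbors in `X_i`. -/
def gmFlip {V : Type*} [Fintype V] (G : SimpleGraph V) {ℓ : ℕ} (f : V → Option (Fin ℓ))
    (u v : V) : Prop :=
  (∃ i : Fin ℓ, f u = none ∧ f v = some i ∧ 2 * nbrsIn G u (Xset f i) = (Xset f i).card) ∨
  (∃ i : Fin ℓ, f v = none ∧ f u = some i ∧ 2 * nbrsIn G v (Xset f i) = (Xset f i).card)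

/-- The Godsil–McKay switched graph `G'`: adjacency within `X_1 ∪ … ∪ X_ℓ`, or within `Y`,
is as in `G`; adjacency between `y ∈ Y` and `x ∈ X_i` is complemented exactly when `y` has
`|X_i|/2` neighbors in `X_i` in `G`. -/
def gmSwitch {V : Type*} [Fintype V] (G : SimpleGraph V) {ℓ : ℕ} (f : V → Option (Fin ℓ)) :
    SimpleGraph V where
  Adj u v := (gmFlip G f u v ∧ ¬ G.Adj u v ∧ u ≠ v) ∨ (¬ gmFlip G f u v ∧ G.Adj u v)
  symm := by
    constructor
    intro u v h
    have hsymm : gmFlip G f u v ↔ gmFlip G f v u := ⟨Or.symm, Or.symm⟩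
    rcases h with ⟨h1, h2, h3⟩ | ⟨h1, h2⟩
    · exact Or.inl ⟨hsymm.mp h1, fun h => h2 (G.symm.symm _ _ h), h3.symm⟩
    · exact Or.inr ⟨fun h => h1 (hsymm.mpr h), G.symm.symm _ _ h2⟩
  loopless := by
    constructor
    intro u h
    rcases h with ⟨_, _, h3⟩ | ⟨_, h2⟩
    · exact h3 rfl
    · exact G.loopless.irrefl u h2

/-- `(U, W)` is a bipartition of the vertex set of `G` witnessing that `G` is a
`(du, dw)`-regular bipartite graph: every edge joins `U` to `W`, every vertex of `U` has
degree `du`, and every vertex of `W` has degree `dw`. -/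
def IsBiRegularBipartition {V : Type*} [Fintype V] [DecidableEq V] (G : SimpleGraph V)
    (U W : Finset V) (du dw : ℕ) : Prop :=
  U ∪ W = Finset.univ ∧ U ∩ W = ∅ ∧
  (∀ u v, G.Adj u v → (u ∈ U ∧ v ∈ W) ∨ (u ∈ W ∧ v ∈ U)) ∧
  (∀ u ∈ U, nbrsIn G u Finset.univ = du) ∧
  (∀ w ∈ W, nbrsIn G w Finset.univ = dw)


open scoped Classical

lemma nbrsIn_eq_sum' {V : Type*} (G : SimpleGraph V) (v : V) (S : Finset V) :
    nbrsIn G v S = ∑ w ∈ S, if G.Adj v w then 1 else 0 := by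
  classical
  rw [nbrsIn, Finset.card_filter]

lemma double_count' {V : Type*} (G : SimpleGraph V) (A B : Finset V) :
    ∑ v ∈ A, nbrsIn G v B = ∑ y ∈ B, nbrsIn G y A := by
  classical
  simp only [nbrsIn_eq_sum']
  rw [Finset.sum_comm]
  refine Finset.sum_congr rfl fun y _ => Finset.sum_congr rfl fun v _ => ?_
  simp [G.adj_comm]

lemma nbrsIn_univ_split' {V : Type*} [Fintype V] (G : SimpleGraph V) {ℓ : ℕ}
    (f : V → Option (Fin ℓ)) (v : V) :
    nbrsIn G v Finset.univ = nbrsIn G v (Yset f) + ∑ j, nbrsIn G v (Xset f j) := by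
  classical
  simp only [nbrsIn_eq_sum']
  rw [← Finset.sum_fiberwise Finset.univ f (fun w => if G.Adj v w then 1 else 0),
    Fintype.sum_option]
  congr 1

/-- In a `(du, dw)`-regular bipartite graph with a Godsil–McKay switching partition, let
`X_i` be a (nonempty) Type-1 set, i.e. `X_i ⊆ U`, and let `Y_i` be the set of vertices of
`Y` having exactly `|X_i|/2` neighbors in `X_i`. Then every vertex of `X_i` is adjacent to
exactly `|Y_i|/2` vertices of `Y_i`; in particular `|Y_i|` is even. -/
theorem gm_type1_half_of_Yi {V : Type*} [Fintype V] [DecidableEq V]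
    (G : SimpleGraph V) (U W : Finset V) (du dw : ℕ)
    (hG : IsBiRegularBipartition G U W du dw)
    {ℓ : ℕ} (f : V → Option (Fin ℓ)) (hf : IsGMPartition G f)
    (i : Fin ℓ) (h1 : Xset f i ⊆ U) (hne : (Xset f i).Nonempty) :
    (∀ v ∈ Xset f i,
        2 * nbrsIn G v ((Yset f).filter
            (fun y => 2 * nbrsIn G y (Xset f i) = (Xset f i).card)) =
          ((Yset f).filter (fun y => 2 * nbrsIn G y (Xset f i) = (Xset f i).card)).card) ∧
    Even ((Yset f).filter (fun y => 2 * nbrsIn G y (Xset f i) = (Xset f i).card)).card := by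
    classical
  obtain ⟨hUW, hUWd, hbip, hdu, hdw⟩ := hG
  obtain ⟨hY, hX⟩ := hf
  set A := Xset f i with hAdef
  set Yi := (Yset f).filter (fun y => 2 * nbrsIn G y A = A.card) with hYidef
  set Yrest := (Yset f).filter (fun y => ¬ (2 * nbrsIn G y A = A.card)) with hYrdef
  set Yfull := Yrest.filter (fun y => nbrsIn G y A = A.card) with hYfdef
  -- for v ∈ A, the neighbors of v in Yrest are exactly Yfull
  have hrest : ∀ v ∈ A, Yrest.filter (fun y => G.Adj v y) = Yfull := by
    intro v hv
    ext y
    simp only [hYfdef, hYrdef, Finset.mem_filter]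
    constructor
    · rintro ⟨⟨hyY, hnh⟩, hadj⟩
      refine ⟨⟨hyY, hnh⟩, ?_⟩
      rcases hY y hyY i with h0 | hh | hfull
      · exfalso
        have hvmem : v ∈ A.filter (fun w => G.Adj y w) :=
          Finset.mem_filter.2 ⟨hv, G.symm.symm _ _ hadj⟩
        have : A.filter (fun w => G.Adj y w) = ∅ := Finset.card_eq_zero.1 h0
        rw [this] at hvmem
        exact absurd hvmem (Finset.notMem_empty v)
      · exact absurd hh hnh
      · exact hfull
    · rintro ⟨⟨hyY, hnh⟩, hfull⟩
      refine ⟨⟨hyY, hnh⟩, ?_⟩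
      have hsub : A.filter (fun w => G.Adj y w) ⊆ A := Finset.filter_subset _ _
      have hfull' : (A.filter (fun w => G.Adj y w)).card = A.card := hfull
      have heq : A.filter (fun w => G.Adj y w) = A :=
        Finset.eq_of_subset_of_card_le hsub (le_of_eq hfull'.symm)
      have : v ∈ A.filter (fun w => G.Adj y w) := by rw [heq]; exact hv
      exact G.symm.symm _ _ (Finset.mem_filter.1 this).2
  -- for v ∈ A, nbrsIn v (Yset f) = nbrsIn v Yi + Yfull.card
  have key1 : ∀ v ∈ A, nbrsIn G v (Yset f) = nbrsIn G v Yi + Yfull.card := by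
    intro v hv
    have hsplit : Yi ∪ Yrest = Yset f := by
      rw [hYidef, hYrdef]
      exact Finset.filter_union_filter_not_eq _ _
    have hdisj : Disjoint Yi Yrest := by
      rw [hYidef, hYrdef]
      exact Finset.disjoint_filter_filter_not _ _ _
    have : nbrsIn G v (Yset f) = nbrsIn G v Yi + nbrsIn G v Yrest := by
      rw [nbrsIn, nbrsIn, nbrsIn, ← hsplit, Finset.filter_union]
      exact Finset.card_union_of_disjoint
        (Finset.disjoint_filter_filter hdisj)
    have h4 : nbrsIn G v Yrest = Yfull.card := congrArg Finset.card (hrest v hv)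
    rw [this, h4]
  -- all vertices of A have the same number of neighbors in Yset f
  have key2 : ∀ u ∈ A, ∀ v ∈ A, nbrsIn G u (Yset f) = nbrsIn G v (Yset f) := by
    intro u hu v hv
    have hu1 := nbrsIn_univ_split' G f u
    have hv1 := nbrsIn_univ_split' G f v
    rw [hdu u (h1 hu)] at hu1
    rw [hdu v (h1 hv)] at hv1
    have hsum : ∑ j, nbrsIn G u (Xset f j) = ∑ j, nbrsIn G v (Xset f j) :=
      Finset.sum_congr rfl fun j _ => hX i j u hu v hv
    omega
  have key3 : ∀ u ∈ A, ∀ v ∈ A, nbrsIn G u Yi = nbrsIn G v Yi := by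
    intro u hu v hv
    have h1' := key1 u hu
    have h2' := key1 v hv
    have h3' := key2 u hu v hv
    omega
  obtain ⟨v₀, hv₀⟩ := hne
  set t := nbrsIn G v₀ Yi with htdef
  have hsum1 : ∑ v ∈ A, nbrsIn G v Yi = A.card * t := by
    rw [Finset.sum_congr rfl fun v hv => key3 v hv v₀ hv₀, Finset.sum_const, smul_eq_mul]
  have hsum2 : 2 * ∑ y ∈ Yi, nbrsIn G y A = Yi.card * A.card := by
    rw [Finset.mul_sum]
    rw [Finset.sum_congr rfl fun y hy => (Finset.mem_filter.1 hy).2, Finset.sum_const,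
      smul_eq_mul]
  have hdc := double_count' G A Yi
  have hkey : A.card * (2 * t) = A.card * Yi.card := by
    calc A.card * (2 * t) = 2 * (A.card * t) := by ring
    _ = 2 * ∑ v ∈ A, nbrsIn G v Yi := by rw [hsum1]
    _ = 2 * ∑ y ∈ Yi, nbrsIn G y A := by rw [hdc]
    _ = Yi.card * A.card := hsum2
    _ = A.card * Yi.card := Nat.mul_comm _ _
  have hApos : 0 < A.card := Finset.card_pos.2 ⟨v₀, hv₀⟩
  have hmain : 2 * t = Yi.card := Nat.eq_of_mul_eq_mul_left hApos hkey
  constructor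
  · intro v hv
    rw [key3 v hv v₀ hv₀]
    exact hmain
  · exact ⟨t, by omega⟩
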